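/- Let F be a finite field of characteristic p with q elements, let k be a positive integer and v a positive divisor of p^k − 1. Let T ∈ F[X] satisfy (*) with T(0) = 0, and suppose A ∈ F[X] is a p^k-additive polynomial satisfying (*) such that T∘X^v = X^{v−1}·A. Then for every f ∈ W(A|F) one has f^v ∈ W(T|F); in particular, |W(T|F)| ≥ (|W(A|F)| − 1)/v + 1. -/

import Mathlib

open Polynomial

private lemma finite_natDegree_le (F : Type*) [Field F] [Fintype F] (n : ℕ) :
    {f : F[X] | f.natDegree ≤ n}.Finite := by
  apply Set.Finite.of_finite_image (f := fun f : F[X] => fun i : Fin (n + 1) => f.coeff i)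
    (Set.toFinite _)
  intro f hf g hg h
  ext i
  by_cases hi : i ≤ n
  · exact congrFun h ⟨i, by omega⟩
  · rw [Polynomial.coeff_eq_zero_of_natDegree_lt (lt_of_le_of_lt hf (by omega)),
      Polynomial.coeff_eq_zero_of_natDegree_lt (lt_of_le_of_lt hg (by omega))]

private lemma W_finite {F : Type*} [Field F] [Fintype F] (q : ℕ) (hq : 2 ≤ q) (T : F[X])
    (hdeg : 2 < T.natDegree) :
    {f : F[X] | ∃ θ : F, θ ≠ 0 ∧
      T.comp f = C θ * ((X ^ q - X) * f.derivative)}.Finite := by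
  apply Set.Finite.subset (finite_natDegree_le F q)
  rintro f ⟨θ, hθ, hf⟩
  simp only [Set.mem_setOf_eq]
  by_cases hf0 : f.natDegree = 0
  · omega
  have hcomp : (T.comp f).natDegree = T.natDegree * f.natDegree := natDegree_comp
  by_cases hd : f.derivative = 0
  · exfalso
    rw [hd, mul_zero, mul_zero] at hf
    rw [hf] at hcomp
    simp only [natDegree_zero] at hcomp
    have := Nat.mul_eq_zero.mp hcomp.symm
    omega
  · have hXq : ((X : F[X]) ^ q - X).natDegree = q := by
      rw [natDegree_sub_eq_left_of_natDegree_lt] <;>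
        simp [natDegree_X_pow, natDegree_X] <;> omega
    have hXq0 : ((X : F[X]) ^ q - X) ≠ 0 := by
      intro h
      rw [h] at hXq
      simp at hXq
      omega
    have hrhs : (C θ * ((X ^ q - X) * f.derivative)).natDegree = q + f.derivative.natDegree := by
      rw [natDegree_mul (by simpa using hθ) (mul_ne_zero hXq0 hd),
        natDegree_mul hXq0 hd, natDegree_C, hXq]
      ring
    rw [hf, hrhs] at hcomp
    have hdlt : f.derivative.natDegree < f.natDegree := natDegree_derivative_lt hf0
    nlinarith [hcomp, hdlt, hdeg, Nat.one_le_iff_ne_zero.2 hf0]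

theorem stmt7 {F : Type*} [Field F] [Fintype F] (p q k v : ℕ) (hp : p.Prime)
    [CharP F p] (hq : Fintype.card F = q) (hk : 0 < k) (hv : 0 < v)
    (hvd : v ∣ p ^ k - 1)
    (T A : F[X])
    (hTstar : T.Monic ∧ 2 < T.natDegree ∧
      Multiset.card T.roots = T.natDegree ∧ T.roots.Nodup)
    (hT0 : T.eval 0 = 0)
    (hAadd : ∃ (m : ℕ) (ω : ℕ → F),
      A = ∑ i ∈ Finset.range (m + 1), C (ω i) * X ^ p ^ (k * i))
    (hAstar : A.Monic ∧ 2 < A.natDegree ∧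
      Multiset.card A.roots = A.natDegree ∧ A.roots.Nodup)
    (hTA : T.comp (X ^ v) = X ^ (v - 1) * A) :
    (∀ f ∈ {f : F[X] | ∃ θ : F, θ ≠ 0 ∧
        A.comp f = C θ * ((X ^ q - X) * f.derivative)},
      f ^ v ∈ {f : F[X] | ∃ θ : F, θ ≠ 0 ∧
        T.comp f = C θ * ((X ^ q - X) * f.derivative)}) ∧
    ((({f : F[X] | ∃ θ : F, θ ≠ 0 ∧
        A.comp f = C θ * ((X ^ q - X) * f.derivative)}.ncard : ℚ) - 1) / v + 1 ≤
      ({f : F[X] | ∃ θ : F, θ ≠ 0 ∧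
        T.comp f = C θ * ((X ^ q - X) * f.derivative)}.ncard : ℚ)) := by
  have hq2 : 2 ≤ q := by rw [← hq]; exact Fintype.one_lt_card
  -- v is not divisible by p, so (v : F) ≠ 0
  have hpv : ¬ p ∣ v := by
    intro h
    have h1 : p ∣ p ^ k - 1 := h.trans hvd
    have h2 : p ∣ p ^ k := dvd_pow_self p hk.ne'
    have h3 : 1 ≤ p ^ k := Nat.one_le_pow _ _ hp.pos
    have h4 : p ^ k - (p ^ k - 1) = 1 := by omega
    have h5 : p ∣ 1 := h4 ▸ Nat.dvd_sub h2 h1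
    have := Nat.le_of_dvd one_pos h5
    have := hp.two_le
    omega
  have hvF : ((v : F)) ≠ 0 := by
    rw [Ne, CharP.cast_eq_zero_iff F p]
    exact hpv
  -- Part 1
  have part1 : ∀ f ∈ {f : F[X] | ∃ θ : F, θ ≠ 0 ∧
      A.comp f = C θ * ((X ^ q - X) * f.derivative)},
      f ^ v ∈ {f : F[X] | ∃ θ : F, θ ≠ 0 ∧
        T.comp f = C θ * ((X ^ q - X) * f.derivative)} := by
    rintro f ⟨θ, hθ, hfA⟩
    refine ⟨θ * (v : F)⁻¹, mul_ne_zero hθ (inv_ne_zero hvF), ?_⟩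
    have key : T.comp (f ^ v) = f ^ (v - 1) * (C θ * ((X ^ q - X) * f.derivative)) := by
      rw [← hfA, ← X_pow_comp (p := f) (k := v), ← comp_assoc, hTA, mul_comp, X_pow_comp]
    rw [key, derivative_pow]
    have hC : (C ((v : F)⁻¹) * C ((v : F))) = 1 := by
      rw [← C_mul, inv_mul_cancel₀ hvF, C_1]
    calc f ^ (v - 1) * (C θ * ((X ^ q - X) * derivative f))
        = (C ((v : F)⁻¹) * C ((v : F))) * (f ^ (v - 1) * (C θ * ((X ^ q - X) * derivative f))) := by
          rw [hC, one_mul]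
      _ = C (θ * (v : F)⁻¹) * ((X ^ q - X) * (C (v : F) * f ^ (v - 1) * derivative f)) := by
          rw [C_mul]; ring
  refine ⟨part1, ?_⟩
  -- Part 2: counting
  set SA := {f : F[X] | ∃ θ : F, θ ≠ 0 ∧ A.comp f = C θ * ((X ^ q - X) * f.derivative)} with hSA
  set ST := {f : F[X] | ∃ θ : F, θ ≠ 0 ∧ T.comp f = C θ * ((X ^ q - X) * f.derivative)} with hST
  have hSAfin : SA.Finite := W_finite q hq2 A hAstar.2.1
  have hSTfin : ST.Finite := W_finite q hq2 T hTstar.2.1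
  have h0T : (0 : F[X]) ∈ ST := by
    refine ⟨1, one_ne_zero, ?_⟩
    simp [Polynomial.comp, eval₂_at_zero, coeff_zero_eq_eval_zero, hT0]
  classical
  set sA := hSAfin.toFinset with hsA
  set sT := hSTfin.toFinset with hsT
  have h0T' : (0 : F[X]) ∈ sT := hSTfin.mem_toFinset.2 h0T
  set sA' := sA.erase 0 with hsA'
  -- the power map
  have himg : (sA'.image (· ^ v)) ⊆ sT.erase 0 := by
    intro g hg
    rw [Finset.mem_image] at hg
    obtain ⟨f, hf, rfl⟩ := hg
    rw [Finset.mem_erase] at hf ⊢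
    refine ⟨pow_ne_zero v hf.1, hSTfin.mem_toFinset.2 (part1 f (hSAfin.mem_toFinset.1 hf.2))⟩
  have hfib : ∀ g ∈ sA'.image (· ^ v), (sA'.filter (fun f => f ^ v = g)).card ≤ v := by
    intro g _
    have hsub : sA'.filter (fun f => f ^ v = g) ⊆ (nthRoots v g).toFinset := by
      intro f hf
      rw [Finset.mem_filter] at hf
      rw [Multiset.mem_toFinset, mem_nthRoots hv]
      exact hf.2
    calc (sA'.filter (fun f => f ^ v = g)).card ≤ (nthRoots v g).toFinset.card :=
          Finset.card_le_card hsub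
      _ ≤ Multiset.card (nthRoots v g) := Multiset.toFinset_card_le _
      _ ≤ v := card_nthRoots v g
  have hcount : sA'.card ≤ v * (sT.erase 0).card := by
    calc sA'.card ≤ v * (sA'.image (· ^ v)).card := Finset.card_le_mul_card_image _ v hfib
      _ ≤ v * (sT.erase 0).card := Nat.mul_le_mul_left v (Finset.card_le_card himg)
  have hTcard : (sT.erase 0).card = sT.card - 1 := Finset.card_erase_of_mem h0T'
  have hT1 : 1 ≤ sT.card := Finset.card_pos.2 ⟨0, h0T'⟩
  have hAcard : sA.card - 1 ≤ sA'.card := Finset.pred_card_le_card_erase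
  -- convert to ncard
  have hncA : SA.ncard = sA.card := by rw [Set.ncard_eq_toFinset_card _ hSAfin]
  have hncT : ST.ncard = sT.card := by rw [Set.ncard_eq_toFinset_card _ hSTfin]
  rw [hncA, hncT]
  rw [hTcard] at hcount
  have hkey : sA.card ≤ v * (sT.card - 1) + 1 := by omega
  have hvQ : (0 : ℚ) < v := by exact_mod_cast hv
  have hcast : (sA.card : ℚ) ≤ v * ((sT.card : ℚ) - 1) + 1 := by
    have : (sA.card : ℚ) ≤ ((v * (sT.card - 1) + 1 : ℕ) : ℚ) := by exact_mod_cast hkey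
    rw [Nat.cast_add, Nat.cast_mul, Nat.cast_sub hT1] at this
    simpa using this
  have hdiv : ((sA.card : ℚ) - 1) / v ≤ (sT.card : ℚ) - 1 := by
    rw [div_le_iff₀ hvQ]
    nlinarith
  linarith
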